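/- A value Φ on TU games satisfies efficiency, symmetry, and n-CSE (coalitional strategic equivalence with respect to nullifying players) if and only if Φ is the Equal Division rule. -/

import Mathlib

open Finset

/-- a value satisfies efficiency, symmetry and `n`-CSE (coalitional
strategic equivalence w.r.t. nullifying players) iff it is the Equal Division rule. -/
theorem ED_characterization_nCSE (n : ℕ) (hn : 1 ≤ n)
    (Φ : (Finset (Fin n) → ℝ) → Fin n → ℝ) :
    ((∀ v : Finset (Fin n) → ℝ, v ∅ = 0 → ∑ i, Φ v i = v Finset.univ) ∧
     (∀ v : Finset (Fin n) → ℝ, v ∅ = 0 → ∀ i j : Fin n,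
        (∀ S ∈ (Finset.univ \ {i, j} : Finset (Fin n)).powerset,
          v (insert i S) = v (insert j S)) → Φ v i = Φ v j) ∧
     (∀ v w : Finset (Fin n) → ℝ, v ∅ = 0 → w ∅ = 0 → ∀ i : Fin n,
        (∀ S : Finset (Fin n), i ∈ S → w S = 0) →
        Φ (v + w) i = Φ v i))
    ↔ (∀ v : Finset (Fin n) → ℝ, v ∅ = 0 → ∀ i : Fin n,
        Φ v i = v Finset.univ / n) := by
  classical
  have hn0 : (n : ℝ) ≠ 0 := Nat.cast_ne_zero.mpr (by omega)
  constructor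
  · rintro ⟨Heff, Hsym, Hcse⟩
    suffices H : ∀ k (v : Finset (Fin n) → ℝ), v ∅ = 0 →
        (Finset.univ.powerset.filter
          (fun S => S ≠ Finset.univ ∧ v S ≠ 0)).card ≤ k →
        ∀ i, Φ v i = v Finset.univ / n by
      intro v hv i
      exact H _ v hv le_rfl i
    intro k
    induction k with
    | zero =>
      intro v hv hcard i
      have hzero : ∀ S : Finset (Fin n), S ≠ Finset.univ → v S = 0 := by
        intro S hS
        by_contra h
        have hmem : S ∈ Finset.univ.powerset.filter
            (fun S => S ≠ Finset.univ ∧ v S ≠ 0) := by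
          simp [hS, h]
        have := Finset.card_pos.mpr ⟨S, hmem⟩
        omega
      have hsym : ∀ j : Fin n, Φ v j = Φ v i := by
        intro j
        by_cases hij : j = i
        · rw [hij]
        · refine Hsym v hv j i ?_
          intro S hS
          simp only [mem_powerset] at hS
          have hiS : i ∉ S := fun h => by simpa using hS h
          have hjS : j ∉ S := fun h => by simpa using hS h
          have h1 : insert j S ≠ Finset.univ := by
            intro h
            have : i ∈ insert j S := h ▸ mem_univ i
            simp [hiS, Ne.symm hij] at this
          have h2 : insert i S ≠ Finset.univ := by
            intro h
            have : j ∈ insert i S := h ▸ mem_univ j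
            simp [hjS, hij] at this
          rw [hzero _ h1, hzero _ h2]
      have hsum := Heff v hv
      rw [Finset.sum_congr rfl (fun j _ => hsym j), Finset.sum_const,
        card_univ, Fintype.card_fin, nsmul_eq_mul] at hsum
      field_simp
      linarith [hsum]
    | succ k IH =>
      intro v hv hcard i
      set B := Finset.univ.powerset.filter
        (fun S => S ≠ Finset.univ ∧ v S ≠ 0) with hB
      have key : ∀ j : Fin n, ∀ S, S ∈ B → j ∉ S → Φ v j = v Finset.univ / n := by
        intro j S hSB hjS
        have hSB' := hSB
        simp only [hB, mem_filter, mem_powerset] at hSB'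
        obtain ⟨-, hSu, hvS⟩ := hSB'
        have hSne : S ≠ ∅ := fun h => hvS (h ▸ hv)
        set w : Finset (Fin n) → ℝ := fun X => if X = S then -(v S) else 0 with hw
        have hw0 : w ∅ = 0 := by
          simp only [hw]
          rw [if_neg (Ne.symm hSne)]
        have hnull : ∀ X, j ∈ X → w X = 0 := by
          intro X hjX
          simp only [hw]
          rw [if_neg]
          intro h
          exact hjS (h ▸ hjX)
        have hstep := Hcse v w hv hw0 j hnull
        have hv' : (v + w) ∅ = 0 := by
          simp [Pi.add_apply, hv, hw0]
        have hsub : (Finset.univ.powerset.filter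
            (fun X => X ≠ Finset.univ ∧ (v + w) X ≠ 0)) ⊆ B.erase S := by
          intro X hX
          simp only [mem_filter, mem_powerset, Pi.add_apply] at hX
          obtain ⟨hXu, hXuniv, hXne⟩ := hX
          have hXS : X ≠ S := by
            intro h
            subst h
            simp only [hw, if_pos rfl] at hXne
            simp at hXne
          have hwX : w X = 0 := by simp only [hw]; rw [if_neg hXS]
          rw [hwX, add_zero] at hXne
          rw [Finset.mem_erase]
          exact ⟨hXS, by simp [hB, hXuniv, hXne]⟩
        have hcard' : (Finset.univ.powerset.filter
            (fun X => X ≠ Finset.univ ∧ (v + w) X ≠ 0)).card ≤ k := by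
          have h1 := Finset.card_le_card hsub
          have h2 := Finset.card_erase_of_mem hSB
          have h3 := Finset.card_pos.mpr ⟨S, hSB⟩
          omega
        have hIH := IH (v + w) hv' hcard' j
        rw [hstep] at hIH
        have huS : (v + w) Finset.univ = v Finset.univ := by
          simp only [Pi.add_apply, hw]
          rw [if_neg (Ne.symm hSu), add_zero]
        rw [huS] at hIH
        exact hIH
      by_cases hiA : ∀ S ∈ B, i ∈ S
      · -- symmetric case: i is in every bad coalition
        have hsA : ∀ j : Fin n, (∀ S ∈ B, j ∈ S) → Φ v j = Φ v i := by
          intro j hj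
          by_cases hij : j = i
          · rw [hij]
          · refine Hsym v hv j i ?_
            intro S hS
            simp only [mem_powerset] at hS
            have hiS : i ∉ S := fun h => by simpa using hS h
            have hjS : j ∉ S := fun h => by simpa using hS h
            have h1 : v (insert j S) = 0 := by
              by_contra h
              by_cases hu : insert j S = Finset.univ
              · have : i ∈ insert j S := hu ▸ mem_univ i
                simp [hiS, Ne.symm hij] at this
              · have hmem : insert j S ∈ B := by simp [hB, hu, h]
                have := hiA _ hmem
                simp [hiS, Ne.symm hij] at this
            have h2 : v (insert i S) = 0 := by
              by_contra h
              by_cases hu : insert i S = Finset.univ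
              · have : j ∈ insert i S := hu ▸ mem_univ j
                simp [hjS, hij] at this
              · have hmem : insert i S ∈ B := by simp [hB, hu, h]
                have := hj _ hmem
                simp [hjS, hij] at this
            rw [h1, h2]
        set A := Finset.univ.filter (fun j : Fin n => ∀ S ∈ B, j ∈ S) with hA'
        have hsum := Heff v hv
        rw [← Finset.sum_filter_add_sum_filter_not Finset.univ
          (fun j : Fin n => ∀ S ∈ B, j ∈ S) (Φ v)] at hsum
        have e1 : ∑ j ∈ A, Φ v j = (A.card : ℝ) * Φ v i := by
          rw [Finset.sum_congr rfl (fun j hj => hsA j (by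
            simpa [hA'] using hj))]
          rw [Finset.sum_const, nsmul_eq_mul]
        have e2 : ∑ j ∈ Finset.univ.filter (fun j : Fin n => ¬ ∀ S ∈ B, j ∈ S), Φ v j
            = ((Finset.univ.filter (fun j : Fin n => ¬ ∀ S ∈ B, j ∈ S)).card : ℝ)
              * (v Finset.univ / n) := by
          rw [Finset.sum_congr rfl (fun j hj => ?_)]
          · rw [Finset.sum_const, nsmul_eq_mul]
          · simp only [mem_filter] at hj
            push_neg at hj
            obtain ⟨S, hSB, hjS⟩ := hj.2
            exact key j S hSB hjS
        rw [e1, e2] at hsum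
        have hcards : A.card
            + (Finset.univ.filter (fun j : Fin n => ¬ ∀ S ∈ B, j ∈ S)).card = n := by
          rw [hA', Finset.card_filter_add_card_filter_not, card_univ,
            Fintype.card_fin]
        have hApos : 1 ≤ A.card := by
          refine Finset.card_pos.mpr ⟨i, ?_⟩
          simp only [hA', mem_filter, mem_univ, true_and]
          exact hiA
        -- arithmetic: vU = a * Φvi + (n - a) * (vU/n)  ⇒  Φ v i = vU / n
        have ha0 : (A.card : ℝ) ≠ 0 := Nat.cast_ne_zero.mpr (by omega)
        have hc : ((Finset.univ.filter (fun j : Fin n => ¬ ∀ S ∈ B, j ∈ S)).card : ℝ)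
            = (n : ℝ) - (A.card : ℝ) := by
          have := hcards
          push_cast [← this]
          ring
        rw [hc] at hsum
        have : (A.card : ℝ) * Φ v i = (A.card : ℝ) * (v Finset.univ / n) := by
          field_simp at hsum ⊢
          have h' : (A.card : ℝ) * (Φ v i * n - v Finset.univ) = 0 := by linarith
          have h'' := (mul_eq_zero.mp h').resolve_left ha0
          linarith
        exact mul_left_cancel₀ ha0 this
      · push_neg at hiA
        obtain ⟨S, hSB, hiS⟩ := hiA
        exact key i S hSB hiS
  · intro hED
    refine ⟨?_, ?_, ?_⟩
    · intro v hv
      rw [Finset.sum_congr rfl (fun i _ => hED v hv i), Finset.sum_const,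
        card_univ, Fintype.card_fin, nsmul_eq_mul]
      field_simp
    · intro v hv i j _
      rw [hED v hv i, hED v hv j]
    · intro v w hv hw i hnull
      have hvw : (v + w) ∅ = 0 := by simp [Pi.add_apply, hv, hw]
      rw [hED (v + w) hvw i, hED v hv i]
      have : w Finset.univ = 0 := hnull Finset.univ (mem_univ i)
      simp [Pi.add_apply, this]
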